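/- Let s = (s₁,s₂,s₃) ∈ ℝ³ with s₁,s₂,s₃ > 0 pairwise distinct, and suppose p_r(s) > 0 for all r = 1,2,3. Then there exists a = (a₁,a₂,a₃) ∈ ℝ³, arbitrarily close to a⁰(s), such that M₂₄(s,a) is positive definite, s_{r+1} + s_{r+2} - s_r + 3S(s)/(2s_r) + 7a_r > 0 for all r, and a_r < a_r⁰(s) for all r. (This establishes that homogeneous metrics on W²⁴ with sec > 0 that do not submerge onto the Cayley plane have strongly positive curvature; in particular W²⁴ admits homogeneous metrics with strongly positive curvature.) -/

import Mathlib

set_option maxHeartbeats 8000000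

open Matrix

/-- `S(s) = 2(s₁s₂+s₁s₃+s₂s₃) - (s₁²+s₂²+s₃²)`. -/
noncomputable def Spoly (s : Fin 3 → ℝ) : ℝ :=
  2 * (s 0 * s 1 + s 0 * s 2 + s 1 * s 2) - (s 0 ^ 2 + s 1 ^ 2 + s 2 ^ 2)

/-- `p_r(s) = (s_{r+1}-s_{r+2})² + 2 s_r (s_{r+1}+s_{r+2}) - 3 s_r²`, indices mod 3. -/
noncomputable def ppoly (s : Fin 3 → ℝ) (r : Fin 3) : ℝ :=
  (s (r + 1) - s (r + 2)) ^ 2 + 2 * s r * (s (r + 1) + s (r + 2)) - 3 * s r ^ 2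

/-- `a_r⁰(s) = ((s_{r+1}-s_{r+2})² - s_r²)/(2 s_r)`, indices mod 3. -/
noncomputable def a0 (s : Fin 3 → ℝ) (r : Fin 3) : ℝ :=
  ((s (r + 1) - s (r + 2)) ^ 2 - s r ^ 2) / (2 * s r)

/-- First block of the modified curvature operator of `(W²⁴, g_s)`. -/
noncomputable def M24 (s a : Fin 3 → ℝ) : Matrix (Fin 3) (Fin 3) ℝ :=
  !![4 * s 0,                   Spoly s / s 2 - 2 * a 2,  Spoly s / s 1 - 2 * a 1;
     Spoly s / s 2 - 2 * a 2,   4 * s 1,                  Spoly s / s 0 - 2 * a 0;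
     Spoly s / s 1 - 2 * a 1,   Spoly s / s 0 - 2 * a 0,  4 * s 2]

/-- Sylvester criterion for an explicit symmetric `3 × 3` real matrix. -/
theorem posDef_3x3 (d0 d1 d2 a b c : ℝ) (h0 : 0 < d0) (h2 : 0 < d0 * d1 - b ^ 2)
    (h3 : 0 < d0 * d1 * d2 + 2 * a * b * c - d0 * a ^ 2 - d1 * c ^ 2 - d2 * b ^ 2) :
    (!![d0, b, c; b, d1, a; c, a, d2]).PosDef := by
  constructor
  · ext i j
    fin_cases i <;> fin_cases j <;> simp [Matrix.conjTranspose_apply]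
  · intro x hx
    have hx' : x 0 ≠ 0 ∨ x 1 ≠ 0 ∨ x 2 ≠ 0 := by
      by_contra h
      push_neg at h
      exact hx (Finsupp.ext fun i => by fin_cases i <;> simp [h.1, h.2.1, h.2.2])
    have hexp : (x.sum fun i xi => x.sum fun j xj => star xi * (!![d0, b, c; b, d1, a; c, a, d2]) i j * xj) =
        d0 * x 0 ^ 2 + d1 * x 1 ^ 2 + d2 * x 2 ^ 2 + 2 * b * x 0 * x 1 + 2 * c * x 0 * x 2
          + 2 * a * x 1 * x 2 := by
      simp [Finsupp.sum_fintype, Fin.sum_univ_three]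
      ring
    rw [hexp]
    rcases eq_or_ne (x 2) 0 with h2z | h2z
    · rcases eq_or_ne (x 1) 0 with h1z | h1z
      · have h0z : x 0 ≠ 0 := by tauto
        rw [h1z, h2z]
        have : 0 < d0 * x 0 ^ 2 := by positivity
        nlinarith
      · rw [h2z]
        have hs : 0 < ((d0 * d1 - b ^ 2) * x 1) ^ 2 := by
          have : (d0 * d1 - b ^ 2) * x 1 ≠ 0 := mul_ne_zero (ne_of_gt h2) h1z
          positivity
        nlinarith [sq_nonneg (d0 * x 0 + b * x 1), mul_pos h0 h2, sq_nonneg (x 1)]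
    · have hs : 0 < d0 * (d0 * d1 * d2 + 2 * a * b * c - d0 * a ^ 2 - d1 * c ^ 2 - d2 * b ^ 2)
          * x 2 ^ 2 := by positivity
      nlinarith [sq_nonneg (d0 * x 0 + b * x 1 + c * x 2),
        sq_nonneg ((d0 * d1 - b ^ 2) * x 1 + (d0 * a - b * c) * x 2), mul_pos h0 h2, h2.le]

/-- There is a small positive `ε` on which finitely many continuous functions that are
positive at `0` remain positive. -/
theorem exists_small_pos (c : ℝ) (hc : 0 < c) (f0 f1 f2 g : ℝ → ℝ)
    (hf0 : Continuous f0) (hf1 : Continuous f1) (hf2 : Continuous f2) (hg : Continuous g)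
    (p0 : 0 < f0 0) (p1 : 0 < f1 0) (p2 : 0 < f2 0) (p3 : 0 < g 0) :
    ∃ ε : ℝ, 0 < ε ∧ ε < c ∧ 0 < f0 ε ∧ 0 < f1 ε ∧ 0 < f2 ε ∧ 0 < g ε := by
  have h1 : ∀ᶠ x in nhdsWithin (0:ℝ) (Set.Ioi 0), 0 < x := self_mem_nhdsWithin
  have h2 : ∀ᶠ x in nhds (0:ℝ), x < c := eventually_lt_nhds hc
  have h3 : ∀ᶠ x in nhds (0:ℝ), 0 < f0 x :=
    ContinuousAt.eventually_lt continuousAt_const hf0.continuousAt p0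
  have h4 : ∀ᶠ x in nhds (0:ℝ), 0 < f1 x :=
    ContinuousAt.eventually_lt continuousAt_const hf1.continuousAt p1
  have h5 : ∀ᶠ x in nhds (0:ℝ), 0 < f2 x :=
    ContinuousAt.eventually_lt continuousAt_const hf2.continuousAt p2
  have h6 : ∀ᶠ x in nhds (0:ℝ), 0 < g x :=
    ContinuousAt.eventually_lt continuousAt_const hg.continuousAt p3
  have h7 : ∀ᶠ x in nhdsWithin (0:ℝ) (Set.Ioi 0),
      (((x < c ∧ 0 < f0 x) ∧ 0 < f1 x) ∧ 0 < f2 x) ∧ 0 < g x :=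
    ((((h2.and h3).and h4).and h5).and h6).filter_mono nhdsWithin_le_nhds
  have h8 : ∀ᶠ x in nhdsWithin (0:ℝ) (Set.Ioi 0),
      0 < x ∧ ((((x < c ∧ 0 < f0 x) ∧ 0 < f1 x) ∧ 0 < f2 x) ∧ 0 < g x) := h1.and h7
  obtain ⟨ε, hε⟩ := h8.exists
  exact ⟨ε, hε.1, hε.2.1.1.1.1, hε.2.1.1.1.2, hε.2.1.1.2, hε.2.1.2, hε.2.2⟩

/-- The key perturbation lemma, stated with pure scalars.  Here `u, v, w` play the role of
`s₀, s₁, s₂`, with `u` the "median" value (`hmid`).  We produce `t₀, t₁, t₂ > 0`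
(so that `a_r = a_r⁰ - t_r / 2`) satisfying all the (denominator-cleared) inequalities,
which form a set that is invariant under cyclic rotation of the data. -/
theorem aux_perturb (u v w δ : ℝ) (hu : 0 < u) (hv : 0 < v) (hw : 0 < w)
    (huv : u ≠ v) (hvw : v ≠ w) (huw : u ≠ w)
    (hp0 : 0 < (v - w) ^ 2 + 2 * u * (v + w) - 3 * u ^ 2)
    (hp1 : 0 < (w - u) ^ 2 + 2 * v * (w + u) - 3 * v ^ 2)
    (hp2 : 0 < (u - v) ^ 2 + 2 * w * (u + v) - 3 * w ^ 2)
    (hmid : 0 < (w - u) * (u - v)) (hδ : 0 < δ) :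
    ∃ t0 t1 t2 : ℝ, 0 < t0 ∧ 0 < t1 ∧ 0 < t2 ∧ t0 < 2 * δ ∧ t1 < 2 * δ ∧ t2 < 2 * δ ∧
      7 * u * t0 < 4 * ((v - w) ^ 2 + 2 * u * (v + w) - 3 * u ^ 2) ∧
      7 * v * t1 < 4 * ((w - u) ^ 2 + 2 * v * (w + u) - 3 * v ^ 2) ∧
      7 * w * t2 < 4 * ((u - v) ^ 2 + 2 * w * (u + v) - 3 * w ^ 2) ∧
      0 < 16 * v * w * u ^ 2 - (2 * (u * (v + w) - (v - w) ^ 2) + u * t0) ^ 2 ∧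
      0 < 16 * u * w * v ^ 2 - (2 * (v * (w + u) - (w - u) ^ 2) + v * t1) ^ 2 ∧
      0 < 16 * u * v * w ^ 2 - (2 * (w * (u + v) - (u - v) ^ 2) + w * t2) ^ 2 ∧
      0 < 64 * (u * v * w) ^ 3
          + 2 * (u * v * w) * ((2 * (u * (v + w) - (v - w) ^ 2) + u * t0)
              * (2 * (v * (w + u) - (w - u) ^ 2) + v * t1)
              * (2 * (w * (u + v) - (u - v) ^ 2) + w * t2))
          - 4 * u * (v * w) ^ 2 * (2 * (u * (v + w) - (v - w) ^ 2) + u * t0) ^ 2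
          - 4 * v * (u * w) ^ 2 * (2 * (v * (w + u) - (w - u) ^ 2) + v * t1) ^ 2
          - 4 * w * (u * v) ^ 2 * (2 * (w * (u + v) - (u - v) ^ 2) + w * t2) ^ 2 := by
  have hS : 0 < 2 * (u * v + u * w + v * w) - (u ^ 2 + v ^ 2 + w ^ 2) := by nlinarith
  have hvw' : v - w ≠ 0 := sub_ne_zero.mpr hvw
  have hwu' : w - u ≠ 0 := sub_ne_zero.mpr (Ne.symm huw)
  have huv' : u - v ≠ 0 := sub_ne_zero.mpr huv
  have hc : (0:ℝ) < min 1 (min (2 * δ) (min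
      (4 * ((v - w) ^ 2 + 2 * u * (v + w) - 3 * u ^ 2) / (7 * u))
      (min (4 * ((w - u) ^ 2 + 2 * v * (w + u) - 3 * v ^ 2) / (7 * v))
        (4 * ((u - v) ^ 2 + 2 * w * (u + v) - 3 * w ^ 2) / (7 * w))))) := by
    refine lt_min one_pos (lt_min (by linarith) (lt_min (by positivity)
      (lt_min (by positivity) (by positivity))))
  obtain ⟨ε, hε0, hεc, hf0ε, hf1ε, hf2ε, hGε⟩ := exists_small_pos _ hc
    (fun x => 16 * v * w * u ^ 2 - (2 * (u * (v + w) - (v - w) ^ 2) + u * x) ^ 2)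
    (fun x => 16 * u * w * v ^ 2 - (2 * (v * (w + u) - (w - u) ^ 2) + v * x ^ 2) ^ 2)
    (fun x => 16 * u * v * w ^ 2 - (2 * (w * (u + v) - (u - v) ^ 2) + w * x ^ 2) ^ 2)
    (fun x =>
      (8*u^2*v^2*w^4 - 16*u^2*v^3*w^3 + 8*u^2*v^4*w^2 - 8*u^3*v*w^4 - 8*u^3*v^2*w^3
        - 8*u^3*v^3*w^2 - 8*u^3*v^4*w + 24*u^4*v*w^3 + 24*u^4*v^2*w^2 + 24*u^4*v^3*w
        - 24*u^5*v*w^2 - 24*u^5*v^2*w + 8*u^6*v*w)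
      + x * (8*u*v*w^6 - 24*u*v^2*w^5 + 16*u*v^3*w^4 + 16*u*v^4*w^3 - 24*u*v^5*w^2 + 8*u*v^6*w
        - 24*u^2*v*w^5 + 32*u^2*v^2*w^4 - 16*u^2*v^3*w^3 + 32*u^2*v^4*w^2 - 24*u^2*v^5*w
        + 24*u^3*v*w^4 - 4*u^3*v^2*w^2 - 24*u^3*v^2*w^3 - 24*u^3*v^3*w^2 + 24*u^3*v^4*w
        - 8*u^4*v*w^3 + 16*u^4*v^2*w^2 - 8*u^4*v^3*w)
      + x ^ 2 * (-4*u^2*v*w^4 + 4*u^2*v^2*w^3 + 4*u^2*v^3*w^2 - 4*u^2*v^4*w + 8*u^3*v*w^3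
        + 8*u^3*v^2*w^2 + 8*u^3*v^3*w - 4*u^4*v*w^2 - 4*u^4*v^2*w)
      + x ^ 3 * (-4*u*v^2*w^4 + 8*u*v^3*w^3 - 4*u*v^4*w^2)
      + x ^ 4 * (2*u^2*v^2*w^2))
    (by fun_prop) (by fun_prop) (by fun_prop) (by fun_prop)
    (by
      show (0:ℝ) < 16 * v * w * u ^ 2 - (2 * (u * (v + w) - (v - w) ^ 2) + u * 0) ^ 2
      have h1 : (0:ℝ) < 4 * (v - w) ^ 2
          * (2 * (u * v + u * w + v * w) - (u ^ 2 + v ^ 2 + w ^ 2)) := by positivity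
      nlinarith [h1])
    (by
      show (0:ℝ) < 16 * u * w * v ^ 2 - (2 * (v * (w + u) - (w - u) ^ 2) + v * (0:ℝ) ^ 2) ^ 2
      have h1 : (0:ℝ) < 4 * (w - u) ^ 2
          * (2 * (u * v + u * w + v * w) - (u ^ 2 + v ^ 2 + w ^ 2)) := by positivity
      nlinarith [h1])
    (by
      show (0:ℝ) < 16 * u * v * w ^ 2 - (2 * (w * (u + v) - (u - v) ^ 2) + w * (0:ℝ) ^ 2) ^ 2
      have h1 : (0:ℝ) < 4 * (u - v) ^ 2
          * (2 * (u * v + u * w + v * w) - (u ^ 2 + v ^ 2 + w ^ 2)) := by positivity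
      nlinarith [h1])
    (by
      have h1 : (0:ℝ) < 8 * u ^ 2 * v * w
          * (2 * (u * v + u * w + v * w) - (u ^ 2 + v ^ 2 + w ^ 2)) * ((w - u) * (u - v)) :=
        mul_pos (mul_pos (by positivity) hS) hmid
      show (0:ℝ) <
        (8*u^2*v^2*w^4 - 16*u^2*v^3*w^3 + 8*u^2*v^4*w^2 - 8*u^3*v*w^4 - 8*u^3*v^2*w^3
          - 8*u^3*v^3*w^2 - 8*u^3*v^4*w + 24*u^4*v*w^3 + 24*u^4*v^2*w^2 + 24*u^4*v^3*w
          - 24*u^5*v*w^2 - 24*u^5*v^2*w + 8*u^6*v*w)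
        + (0:ℝ) * (8*u*v*w^6 - 24*u*v^2*w^5 + 16*u*v^3*w^4 + 16*u*v^4*w^3 - 24*u*v^5*w^2
          + 8*u*v^6*w - 24*u^2*v*w^5 + 32*u^2*v^2*w^4 - 16*u^2*v^3*w^3 + 32*u^2*v^4*w^2
          - 24*u^2*v^5*w + 24*u^3*v*w^4 - 4*u^3*v^2*w^2 - 24*u^3*v^2*w^3 - 24*u^3*v^3*w^2
          + 24*u^3*v^4*w - 8*u^4*v*w^3 + 16*u^4*v^2*w^2 - 8*u^4*v^3*w)
        + (0:ℝ) ^ 2 * (-4*u^2*v*w^4 + 4*u^2*v^2*w^3 + 4*u^2*v^3*w^2 - 4*u^2*v^4*w + 8*u^3*v*w^3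
          + 8*u^3*v^2*w^2 + 8*u^3*v^3*w - 4*u^4*v*w^2 - 4*u^4*v^2*w)
        + (0:ℝ) ^ 3 * (-4*u*v^2*w^4 + 8*u*v^3*w^3 - 4*u*v^4*w^2)
        + (0:ℝ) ^ 4 * (2*u^2*v^2*w^2)
      nlinarith [h1])
  have hε1 : ε < 1 := lt_of_lt_of_le hεc (min_le_left _ _)
  have hε2δ : ε < 2 * δ := lt_of_lt_of_le hεc
    (le_trans (min_le_right _ _) (min_le_left _ _))
  have hεp0 : ε < 4 * ((v - w) ^ 2 + 2 * u * (v + w) - 3 * u ^ 2) / (7 * u) :=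
    lt_of_lt_of_le hεc
      (le_trans (min_le_right _ _) (le_trans (min_le_right _ _) (min_le_left _ _)))
  have hεp1 : ε < 4 * ((w - u) ^ 2 + 2 * v * (w + u) - 3 * v ^ 2) / (7 * v) :=
    lt_of_lt_of_le hεc
      (le_trans (min_le_right _ _) (le_trans (min_le_right _ _)
        (le_trans (min_le_right _ _) (min_le_left _ _))))
  have hεp2 : ε < 4 * ((u - v) ^ 2 + 2 * w * (u + v) - 3 * w ^ 2) / (7 * w) :=
    lt_of_lt_of_le hεc
      (le_trans (min_le_right _ _) (le_trans (min_le_right _ _)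
        (le_trans (min_le_right _ _) (min_le_right _ _))))
  have hεsq : ε ^ 2 < ε := by nlinarith
  have hb0 : 7 * u * ε < 4 * ((v - w) ^ 2 + 2 * u * (v + w) - 3 * u ^ 2) := by
    rw [lt_div_iff₀ (by positivity : (0:ℝ) < 7 * u)] at hεp0
    linarith [hεp0]
  have hb1 : 7 * v * ε ^ 2 < 4 * ((w - u) ^ 2 + 2 * v * (w + u) - 3 * v ^ 2) := by
    rw [lt_div_iff₀ (by positivity : (0:ℝ) < 7 * v)] at hεp1
    nlinarith [hεp1]
  have hb2 : 7 * w * ε ^ 2 < 4 * ((u - v) ^ 2 + 2 * w * (u + v) - 3 * w ^ 2) := by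
    rw [lt_div_iff₀ (by positivity : (0:ℝ) < 7 * w)] at hεp2
    nlinarith [hεp2]
  have hm0 : 0 < 16 * v * w * u ^ 2 - (2 * (u * (v + w) - (v - w) ^ 2) + u * ε) ^ 2 := hf0ε
  have hm1 : 0 < 16 * u * w * v ^ 2 - (2 * (v * (w + u) - (w - u) ^ 2) + v * ε ^ 2) ^ 2 := hf1ε
  have hm2 : 0 < 16 * u * v * w ^ 2 - (2 * (w * (u + v) - (u - v) ^ 2) + w * ε ^ 2) ^ 2 := hf2ε
  have hG' : (0:ℝ) <
      (8*u^2*v^2*w^4 - 16*u^2*v^3*w^3 + 8*u^2*v^4*w^2 - 8*u^3*v*w^4 - 8*u^3*v^2*w^3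
        - 8*u^3*v^3*w^2 - 8*u^3*v^4*w + 24*u^4*v*w^3 + 24*u^4*v^2*w^2 + 24*u^4*v^3*w
        - 24*u^5*v*w^2 - 24*u^5*v^2*w + 8*u^6*v*w)
      + ε * (8*u*v*w^6 - 24*u*v^2*w^5 + 16*u*v^3*w^4 + 16*u*v^4*w^3 - 24*u*v^5*w^2 + 8*u*v^6*w
        - 24*u^2*v*w^5 + 32*u^2*v^2*w^4 - 16*u^2*v^3*w^3 + 32*u^2*v^4*w^2 - 24*u^2*v^5*w
        + 24*u^3*v*w^4 - 4*u^3*v^2*w^2 - 24*u^3*v^2*w^3 - 24*u^3*v^3*w^2 + 24*u^3*v^4*w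
        - 8*u^4*v*w^3 + 16*u^4*v^2*w^2 - 8*u^4*v^3*w)
      + ε ^ 2 * (-4*u^2*v*w^4 + 4*u^2*v^2*w^3 + 4*u^2*v^3*w^2 - 4*u^2*v^4*w + 8*u^3*v*w^3
        + 8*u^3*v^2*w^2 + 8*u^3*v^3*w - 4*u^4*v*w^2 - 4*u^4*v^2*w)
      + ε ^ 3 * (-4*u*v^2*w^4 + 8*u*v^3*w^3 - 4*u*v^4*w^2)
      + ε ^ 4 * (2*u^2*v^2*w^2) := hGε
  have hsqpos : 0 < ε ^ 2 := by positivity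
  have h2δ' : ε ^ 2 < 2 * δ := lt_trans hεsq hε2δ
  have hfact : 64 * (u * v * w) ^ 3
      + 2 * (u * v * w) * ((2 * (u * (v + w) - (v - w) ^ 2) + u * ε)
          * (2 * (v * (w + u) - (w - u) ^ 2) + v * ε ^ 2)
          * (2 * (w * (u + v) - (u - v) ^ 2) + w * ε ^ 2))
      - 4 * u * (v * w) ^ 2 * (2 * (u * (v + w) - (v - w) ^ 2) + u * ε) ^ 2
      - 4 * v * (u * w) ^ 2 * (2 * (v * (w + u) - (w - u) ^ 2) + v * ε ^ 2) ^ 2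
      - 4 * w * (u * v) ^ 2 * (2 * (w * (u + v) - (u - v) ^ 2) + w * ε ^ 2) ^ 2
      = ε * (
      (8*u^2*v^2*w^4 - 16*u^2*v^3*w^3 + 8*u^2*v^4*w^2 - 8*u^3*v*w^4 - 8*u^3*v^2*w^3
        - 8*u^3*v^3*w^2 - 8*u^3*v^4*w + 24*u^4*v*w^3 + 24*u^4*v^2*w^2 + 24*u^4*v^3*w
        - 24*u^5*v*w^2 - 24*u^5*v^2*w + 8*u^6*v*w)
      + ε * (8*u*v*w^6 - 24*u*v^2*w^5 + 16*u*v^3*w^4 + 16*u*v^4*w^3 - 24*u*v^5*w^2 + 8*u*v^6*w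
        - 24*u^2*v*w^5 + 32*u^2*v^2*w^4 - 16*u^2*v^3*w^3 + 32*u^2*v^4*w^2 - 24*u^2*v^5*w
        + 24*u^3*v*w^4 - 4*u^3*v^2*w^2 - 24*u^3*v^2*w^3 - 24*u^3*v^3*w^2 + 24*u^3*v^4*w
        - 8*u^4*v*w^3 + 16*u^4*v^2*w^2 - 8*u^4*v^3*w)
      + ε ^ 2 * (-4*u^2*v*w^4 + 4*u^2*v^2*w^3 + 4*u^2*v^3*w^2 - 4*u^2*v^4*w + 8*u^3*v*w^3
        + 8*u^3*v^2*w^2 + 8*u^3*v^3*w - 4*u^4*v*w^2 - 4*u^4*v^2*w)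
      + ε ^ 3 * (-4*u*v^2*w^4 + 8*u*v^3*w^3 - 4*u*v^4*w^2)
      + ε ^ 4 * (2*u^2*v^2*w^2)) := by ring
  have hdetfinal : 0 < 64 * (u * v * w) ^ 3
      + 2 * (u * v * w) * ((2 * (u * (v + w) - (v - w) ^ 2) + u * ε)
          * (2 * (v * (w + u) - (w - u) ^ 2) + v * ε ^ 2)
          * (2 * (w * (u + v) - (u - v) ^ 2) + w * ε ^ 2))
      - 4 * u * (v * w) ^ 2 * (2 * (u * (v + w) - (v - w) ^ 2) + u * ε) ^ 2
      - 4 * v * (u * w) ^ 2 * (2 * (v * (w + u) - (w - u) ^ 2) + v * ε ^ 2) ^ 2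
      - 4 * w * (u * v) ^ 2 * (2 * (w * (u + v) - (u - v) ^ 2) + w * ε ^ 2) ^ 2 := by
    rw [hfact]
    exact mul_pos hε0 hG'
  exact ⟨ε, ε ^ 2, ε ^ 2, hε0, hsqpos, hsqpos, hε2δ, h2δ', h2δ', hb0, hb1, hb2, hm0, hm1, hm2,
    hdetfinal⟩

/-- Packaging lemma: from the scalar data produced by `aux_perturb` (suitably rotated),
produce the vector `a` and verify all the conclusions. -/
theorem main_aux (s : Fin 3 → ℝ) (hs0 : 0 < s 0) (hs1 : 0 < s 1) (hs2 : 0 < s 2)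
    (δ : ℝ) (hδ : 0 < δ) (t0 t1 t2 : ℝ)
    (ht0 : 0 < t0) (ht1 : 0 < t1) (ht2 : 0 < t2)
    (hd0 : t0 < 2 * δ) (hd1 : t1 < 2 * δ) (hd2 : t2 < 2 * δ)
    (h70 : 7 * s 0 * t0 < 4 * ((s 1 - s 2) ^ 2 + 2 * s 0 * (s 1 + s 2) - 3 * s 0 ^ 2))
    (h71 : 7 * s 1 * t1 < 4 * ((s 2 - s 0) ^ 2 + 2 * s 1 * (s 2 + s 0) - 3 * s 1 ^ 2))
    (h72 : 7 * s 2 * t2 < 4 * ((s 0 - s 1) ^ 2 + 2 * s 2 * (s 0 + s 1) - 3 * s 2 ^ 2))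
    (hm2 : 0 < 16 * s 0 * s 1 * s 2 ^ 2
        - (2 * (s 2 * (s 0 + s 1) - (s 0 - s 1) ^ 2) + s 2 * t2) ^ 2)
    (hdet : 0 < 64 * (s 0 * s 1 * s 2) ^ 3
        + 2 * (s 0 * s 1 * s 2) * ((2 * (s 0 * (s 1 + s 2) - (s 1 - s 2) ^ 2) + s 0 * t0)
            * (2 * (s 1 * (s 2 + s 0) - (s 2 - s 0) ^ 2) + s 1 * t1)
            * (2 * (s 2 * (s 0 + s 1) - (s 0 - s 1) ^ 2) + s 2 * t2))
        - 4 * s 0 * (s 1 * s 2) ^ 2 * (2 * (s 0 * (s 1 + s 2) - (s 1 - s 2) ^ 2) + s 0 * t0) ^ 2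
        - 4 * s 1 * (s 0 * s 2) ^ 2 * (2 * (s 1 * (s 2 + s 0) - (s 2 - s 0) ^ 2) + s 1 * t1) ^ 2
        - 4 * s 2 * (s 0 * s 1) ^ 2
            * (2 * (s 2 * (s 0 + s 1) - (s 0 - s 1) ^ 2) + s 2 * t2) ^ 2) :
    ∃ a : Fin 3 → ℝ, (∀ r, |a r - a0 s r| < δ) ∧
        (M24 s a).PosDef ∧
        (∀ r, 0 < s (r + 1) + s (r + 2) - s r + 3 * Spoly s / (2 * s r) + 7 * a r) ∧
        (∀ r, a r < a0 s r) := by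
  have hs0' : s 0 ≠ 0 := ne_of_gt hs0
  have hs1' : s 1 ≠ 0 := ne_of_gt hs1
  have hs2' : s 2 ≠ 0 := ne_of_gt hs2
  have i01 : (0:Fin 3) + 1 = 1 := rfl
  have i02 : (0:Fin 3) + 2 = 2 := rfl
  have i11 : (1:Fin 3) + 1 = 2 := rfl
  have i12 : (1:Fin 3) + 2 = 0 := rfl
  have i21 : (2:Fin 3) + 1 = 0 := rfl
  have i22 : (2:Fin 3) + 2 = 1 := rfl
  refine ⟨![a0 s 0 - t0 / 2, a0 s 1 - t1 / 2, a0 s 2 - t2 / 2], ?_, ?_, ?_, ?_⟩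
  · intro r
    fin_cases r
    · show |a0 s 0 - t0 / 2 - a0 s 0| < δ
      rw [show a0 s 0 - t0 / 2 - a0 s 0 = -(t0 / 2) by ring, abs_neg,
        abs_of_pos (by linarith)]
      linarith
    · show |a0 s 1 - t1 / 2 - a0 s 1| < δ
      rw [show a0 s 1 - t1 / 2 - a0 s 1 = -(t1 / 2) by ring, abs_neg,
        abs_of_pos (by linarith)]
      linarith
    · show |a0 s 2 - t2 / 2 - a0 s 2| < δ
      rw [show a0 s 2 - t2 / 2 - a0 s 2 = -(t2 / 2) by ring, abs_neg,
        abs_of_pos (by linarith)]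
      linarith
  · -- positive definiteness
    have hM : M24 s ![a0 s 0 - t0 / 2, a0 s 1 - t1 / 2, a0 s 2 - t2 / 2] =
        !![4 * s 0, (2 * (s 2 * (s 0 + s 1) - (s 0 - s 1) ^ 2) + s 2 * t2) / s 2,
            (2 * (s 1 * (s 2 + s 0) - (s 2 - s 0) ^ 2) + s 1 * t1) / s 1;
          (2 * (s 2 * (s 0 + s 1) - (s 0 - s 1) ^ 2) + s 2 * t2) / s 2, 4 * s 1,
            (2 * (s 0 * (s 1 + s 2) - (s 1 - s 2) ^ 2) + s 0 * t0) / s 0;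
          (2 * (s 1 * (s 2 + s 0) - (s 2 - s 0) ^ 2) + s 1 * t1) / s 1,
            (2 * (s 0 * (s 1 + s 2) - (s 1 - s 2) ^ 2) + s 0 * t0) / s 0, 4 * s 2] := by
      rw [M24]
      have e0 : Spoly s / s 0 - 2 * (![a0 s 0 - t0 / 2, a0 s 1 - t1 / 2, a0 s 2 - t2 / 2] 0)
          = (2 * (s 0 * (s 1 + s 2) - (s 1 - s 2) ^ 2) + s 0 * t0) / s 0 := by
        show Spoly s / s 0 - 2 * (a0 s 0 - t0 / 2) = _
        rw [Spoly, a0, i01, i02]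
        field_simp
        ring
      have e1 : Spoly s / s 1 - 2 * (![a0 s 0 - t0 / 2, a0 s 1 - t1 / 2, a0 s 2 - t2 / 2] 1)
          = (2 * (s 1 * (s 2 + s 0) - (s 2 - s 0) ^ 2) + s 1 * t1) / s 1 := by
        show Spoly s / s 1 - 2 * (a0 s 1 - t1 / 2) = _
        rw [Spoly, a0, i11, i12]
        field_simp
        ring
      have e2 : Spoly s / s 2 - 2 * (![a0 s 0 - t0 / 2, a0 s 1 - t1 / 2, a0 s 2 - t2 / 2] 2)
          = (2 * (s 2 * (s 0 + s 1) - (s 0 - s 1) ^ 2) + s 2 * t2) / s 2 := by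
        show Spoly s / s 2 - 2 * (a0 s 2 - t2 / 2) = _
        rw [Spoly, a0, i21, i22]
        field_simp
        ring
      rw [e0, e1, e2]
    rw [hM]
    apply posDef_3x3
    · positivity
    · have e : 4 * s 0 * (4 * s 1)
          - ((2 * (s 2 * (s 0 + s 1) - (s 0 - s 1) ^ 2) + s 2 * t2) / s 2) ^ 2
          = (16 * s 0 * s 1 * s 2 ^ 2
              - (2 * (s 2 * (s 0 + s 1) - (s 0 - s 1) ^ 2) + s 2 * t2) ^ 2) / s 2 ^ 2 := by
        field_simp
        ring
      rw [e]
      positivity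
    · have e : 4 * s 0 * (4 * s 1) * (4 * s 2)
          + 2 * ((2 * (s 0 * (s 1 + s 2) - (s 1 - s 2) ^ 2) + s 0 * t0) / s 0)
              * ((2 * (s 2 * (s 0 + s 1) - (s 0 - s 1) ^ 2) + s 2 * t2) / s 2)
              * ((2 * (s 1 * (s 2 + s 0) - (s 2 - s 0) ^ 2) + s 1 * t1) / s 1)
          - 4 * s 0 * ((2 * (s 0 * (s 1 + s 2) - (s 1 - s 2) ^ 2) + s 0 * t0) / s 0) ^ 2
          - 4 * s 1 * ((2 * (s 1 * (s 2 + s 0) - (s 2 - s 0) ^ 2) + s 1 * t1) / s 1) ^ 2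
          - 4 * s 2 * ((2 * (s 2 * (s 0 + s 1) - (s 0 - s 1) ^ 2) + s 2 * t2) / s 2) ^ 2
          = (64 * (s 0 * s 1 * s 2) ^ 3
              + 2 * (s 0 * s 1 * s 2) * ((2 * (s 0 * (s 1 + s 2) - (s 1 - s 2) ^ 2) + s 0 * t0)
                  * (2 * (s 1 * (s 2 + s 0) - (s 2 - s 0) ^ 2) + s 1 * t1)
                  * (2 * (s 2 * (s 0 + s 1) - (s 0 - s 1) ^ 2) + s 2 * t2))
              - 4 * s 0 * (s 1 * s 2) ^ 2
                  * (2 * (s 0 * (s 1 + s 2) - (s 1 - s 2) ^ 2) + s 0 * t0) ^ 2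
              - 4 * s 1 * (s 0 * s 2) ^ 2
                  * (2 * (s 1 * (s 2 + s 0) - (s 2 - s 0) ^ 2) + s 1 * t1) ^ 2
              - 4 * s 2 * (s 0 * s 1) ^ 2
                  * (2 * (s 2 * (s 0 + s 1) - (s 0 - s 1) ^ 2) + s 2 * t2) ^ 2)
            / (s 0 * s 1 * s 2) ^ 2 := by
        field_simp
        ring
      rw [e]
      positivity
  · intro r
    fin_cases r
    · show 0 < s (0 + 1) + s (0 + 2) - s 0 + 3 * Spoly s / (2 * s 0) + 7 * (a0 s 0 - t0 / 2)
      rw [i01, i02]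
      have e : s 1 + s 2 - s 0 + 3 * Spoly s / (2 * s 0) + 7 * (a0 s 0 - t0 / 2)
          = (4 * ((s 1 - s 2) ^ 2 + 2 * s 0 * (s 1 + s 2) - 3 * s 0 ^ 2) - 7 * s 0 * t0)
            / (2 * s 0) := by
        rw [Spoly, a0, i01, i02]
        field_simp
        ring
      rw [e]
      have h : 0 < 4 * ((s 1 - s 2) ^ 2 + 2 * s 0 * (s 1 + s 2) - 3 * s 0 ^ 2) - 7 * s 0 * t0 :=
        by linarith
      positivity
    · show 0 < s (1 + 1) + s (1 + 2) - s 1 + 3 * Spoly s / (2 * s 1) + 7 * (a0 s 1 - t1 / 2)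
      rw [i11, i12]
      have e : s 2 + s 0 - s 1 + 3 * Spoly s / (2 * s 1) + 7 * (a0 s 1 - t1 / 2)
          = (4 * ((s 2 - s 0) ^ 2 + 2 * s 1 * (s 2 + s 0) - 3 * s 1 ^ 2) - 7 * s 1 * t1)
            / (2 * s 1) := by
        rw [Spoly, a0, i11, i12]
        field_simp
        ring
      rw [e]
      have h : 0 < 4 * ((s 2 - s 0) ^ 2 + 2 * s 1 * (s 2 + s 0) - 3 * s 1 ^ 2) - 7 * s 1 * t1 :=
        by linarith
      positivity
    · show 0 < s (2 + 1) + s (2 + 2) - s 2 + 3 * Spoly s / (2 * s 2) + 7 * (a0 s 2 - t2 / 2)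
      rw [i21, i22]
      have e : s 0 + s 1 - s 2 + 3 * Spoly s / (2 * s 2) + 7 * (a0 s 2 - t2 / 2)
          = (4 * ((s 0 - s 1) ^ 2 + 2 * s 2 * (s 0 + s 1) - 3 * s 2 ^ 2) - 7 * s 2 * t2)
            / (2 * s 2) := by
        rw [Spoly, a0, i21, i22]
        field_simp
        ring
      rw [e]
      have h : 0 < 4 * ((s 0 - s 1) ^ 2 + 2 * s 2 * (s 0 + s 1) - 3 * s 2 ^ 2) - 7 * s 2 * t2 :=
        by linarith
      positivity
  · intro r
    fin_cases r
    · show a0 s 0 - t0 / 2 < a0 s 0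
      linarith
    · show a0 s 1 - t1 / 2 < a0 s 1
      linarith
    · show a0 s 2 - t2 / 2 < a0 s 2
      linarith

/-- If `s₁, s₂, s₃ > 0` are pairwise distinct and `p_r(s) > 0` for all `r`, then there
exists `a` arbitrarily close to `a⁰(s)` making all blocks positive definite. -/
theorem stronglyPos_W24_exists (s : Fin 3 → ℝ) (hs : ∀ r, 0 < s r)
    (hd : s 0 ≠ s 1 ∧ s 0 ≠ s 2 ∧ s 1 ≠ s 2) (hp : ∀ r, 0 < ppoly s r) :
    ∀ δ : ℝ, 0 < δ →
      ∃ a : Fin 3 → ℝ, (∀ r, |a r - a0 s r| < δ) ∧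
        (M24 s a).PosDef ∧
        (∀ r, 0 < s (r + 1) + s (r + 2) - s r + 3 * Spoly s / (2 * s r) + 7 * a r) ∧
        (∀ r, a r < a0 s r) := by
  intro δ hδ
  obtain ⟨h01, h02, h12⟩ := hd
  have hs0 := hs 0; have hs1 := hs 1; have hs2 := hs 2
  have hp0 : 0 < (s 1 - s 2) ^ 2 + 2 * s 0 * (s 1 + s 2) - 3 * s 0 ^ 2 := hp 0
  have hp1 : 0 < (s 2 - s 0) ^ 2 + 2 * s 1 * (s 2 + s 0) - 3 * s 1 ^ 2 := hp 1
  have hp2 : 0 < (s 0 - s 1) ^ 2 + 2 * s 2 * (s 0 + s 1) - 3 * s 2 ^ 2 := hp 2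
  have htri : 0 < (s 2 - s 0) * (s 0 - s 1) ∨ 0 < (s 0 - s 1) * (s 1 - s 2)
      ∨ 0 < (s 1 - s 2) * (s 2 - s 0) := by
    by_contra hcon
    push_neg at hcon
    obtain ⟨hA, hB, hC⟩ := hcon
    have hne : (s 0 - s 1) * ((s 1 - s 2) * (s 2 - s 0)) ≠ 0 :=
      mul_ne_zero (sub_ne_zero.mpr h01)
        (mul_ne_zero (sub_ne_zero.mpr h12) (sub_ne_zero.mpr (Ne.symm h02)))
    have hsq : 0 < ((s 0 - s 1) * ((s 1 - s 2) * (s 2 - s 0))) ^ 2 :=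
      lt_of_le_of_ne (sq_nonneg _) (Ne.symm (pow_ne_zero 2 hne))
    nlinarith [mul_nonneg (mul_nonneg (neg_nonneg.mpr hA) (neg_nonneg.mpr hB))
      (neg_nonneg.mpr hC)]
  rcases htri with hmid | hmid | hmid
  · obtain ⟨t0, t1, t2, ht0, ht1, ht2, hd0, hd1, hd2, h70, h71, h72, hm0, hm1, hm2, hdet⟩ :=
      aux_perturb (s 0) (s 1) (s 2) δ hs0 hs1 hs2 h01 h12 h02 hp0 hp1 hp2 hmid hδ
    exact main_aux s hs0 hs1 hs2 δ hδ t0 t1 t2 ht0 ht1 ht2 hd0 hd1 hd2 h70 h71 h72 hm2 hdet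
  · obtain ⟨t0, t1, t2, ht0, ht1, ht2, hd0, hd1, hd2, h70, h71, h72, hm0, hm1, hm2, hdet⟩ :=
      aux_perturb (s 1) (s 2) (s 0) δ hs1 hs2 hs0 h12 (Ne.symm h02) (Ne.symm h01)
        hp1 hp2 hp0 hmid hδ
    exact main_aux s hs0 hs1 hs2 δ hδ t2 t0 t1 ht2 ht0 ht1 hd2 hd0 hd1
      (by linarith [h72]) (by linarith [h70]) (by linarith [h71]) (by linarith [hm1])
      (by linarith [hdet])
  · obtain ⟨t0, t1, t2, ht0, ht1, ht2, hd0, hd1, hd2, h70, h71, h72, hm0, hm1, hm2, hdet⟩ :=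
      aux_perturb (s 2) (s 0) (s 1) δ hs2 hs0 hs1 (Ne.symm h02) h01 (Ne.symm h12)
        hp2 hp0 hp1 hmid hδ
    exact main_aux s hs0 hs1 hs2 δ hδ t1 t2 t0 ht1 ht2 ht0 hd1 hd2 hd0
      (by linarith [h71]) (by linarith [h72]) (by linarith [h70]) (by linarith [hm0])
      (by linarith [hdet])
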